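/- Let W be a singular n×n matrix over a field F with Drazin index i(W) = k ≥ 1, let W⁻ be a von Neumann inverse of W, and let Y be the 2n×2n block matrix Y = [[0, W·W⁻],[W, 0]]. Then i(Y) = 2·i(W) − 1 and Y^D = [[0, W^D·W·W⁻],[W·W^D, 0]]. -/
import Mathlib


open Matrix Polynomial

/-- The Drazin index of a square matrix: the smallest natural number `k`
such that `rank (A ^ k) = rank (A ^ (k+1))`. -/
noncomputable def drazinIndex {n : Type*} [Fintype n] [DecidableEq n]
    {F : Type*} [Field F] (A : Matrix n n F) : ℕ :=
  sInf {k : ℕ | (A ^ k).rank = (A ^ (k + 1)).rank}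

/-- `X` is the Drazin inverse of `A`:
`A^(k+1) * X = A^k`, `X * A * X = X`, `A * X = X * A` with `k = drazinIndex A`. -/
def IsDrazinInverse {n : Type*} [Fintype n] [DecidableEq n]
    {F : Type*} [Field F] (A X : Matrix n n F) : Prop :=
  A ^ (drazinIndex A + 1) * X = A ^ drazinIndex A ∧ X * A * X = X ∧ A * X = X * A

section Aux
variable {F : Type*} [Field F]

set_option maxHeartbeats 1000000 in
lemma finrank_submodule_prod {V W : Type*} [AddCommGroup V] [Module F V] [AddCommGroup W]
    [Module F W] [FiniteDimensional F V] [FiniteDimensional F W]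
    (p : Submodule F V) (q : Submodule F W) :
    Module.finrank F (p.prod q) = Module.finrank F p + Module.finrank F q := by
  have h1 : Module.finrank F (p.map (LinearMap.inl F V W)) = Module.finrank F p :=
    (p.equivMapOfInjective (LinearMap.inl F V W) LinearMap.inl_injective).finrank_eq.symm
  have h2 : Module.finrank F (q.map (LinearMap.inr F V W)) = Module.finrank F q :=
    (q.equivMapOfInjective (LinearMap.inr F V W) LinearMap.inr_injective).finrank_eq.symm
  have hdisj : Disjoint (p.map (LinearMap.inl F V W)) (q.map (LinearMap.inr F V W)) :=
    (LinearMap.disjoint_inl_inr).mono LinearMap.map_le_range LinearMap.map_le_range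
  have key := Submodule.finrank_sup_add_finrank_inf_eq (p.map (LinearMap.inl F V W))
      (q.map (LinearMap.inr F V W))
  rw [hdisj.eq_bot, finrank_bot, add_zero, h1, h2] at key
  rw [LinearMap.prod_eq_sup_map, key]

lemma range_prodMap' {V W V' W' : Type*} [AddCommGroup V] [Module F V] [AddCommGroup W]
    [Module F W] [AddCommGroup V'] [Module F V'] [AddCommGroup W'] [Module F W']
    (f : V →ₗ[F] V') (g : W →ₗ[F] W') :
    LinearMap.range (f.prodMap g) = (LinearMap.range f).prod (LinearMap.range g) := by
  ext ⟨a, b⟩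
  simp only [LinearMap.mem_range, Submodule.mem_prod, LinearMap.prodMap_apply, Prod.ext_iff,
    Prod.exists]
  constructor
  · rintro ⟨x, y, h1, h2⟩; exact ⟨⟨x, h1⟩, ⟨y, h2⟩⟩
  · rintro ⟨⟨x, h1⟩, ⟨y, h2⟩⟩; exact ⟨x, y, h1, h2⟩

lemma rank_fromBlocks_diag {p q : Type*} [Fintype p] [Fintype q] [DecidableEq p] [DecidableEq q]
    (A : Matrix p p F) (B : Matrix q q F) :
    (fromBlocks A 0 0 B).rank = A.rank + B.rank := by
  set e := LinearEquiv.sumArrowLequivProdArrow p q F F with he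
  have hM : (fromBlocks A 0 0 B).mulVecLin
      = (e.symm.toLinearMap ∘ₗ (A.mulVecLin.prodMap B.mulVecLin)) ∘ₗ e.toLinearMap := by
    apply LinearMap.ext; intro v
    have hv : v = Sum.elim (v ∘ Sum.inl) (v ∘ Sum.inr) := (Sum.elim_comp_inl_inr v).symm
    funext i
    rw [Matrix.mulVecLin_apply]
    nth_rewrite 1 [hv]
    rw [fromBlocks_mulVec]
    cases i with
    | inl i =>
        simp [e, LinearEquiv.sumArrowLequivProdArrow, Equiv.sumArrowEquivProdArrow, Matrix.zero_mulVec]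
    | inr i =>
        simp [e, LinearEquiv.sumArrowLequivProdArrow, Equiv.sumArrowEquivProdArrow, Matrix.zero_mulVec]
  rw [Matrix.rank, hM, LinearMap.range_comp_of_range_eq_top _ (LinearEquiv.range e),
    LinearMap.range_comp, LinearEquiv.finrank_map_eq, range_prodMap', finrank_submodule_prod,
    Matrix.rank, Matrix.rank]

lemma rank_fromBlocks_antidiag {m : Type*} [Fintype m] [DecidableEq m]
    (B C : Matrix m m F) :
    (fromBlocks 0 B C 0).rank = B.rank + C.rank := by
  set S : Matrix (m ⊕ m) (m ⊕ m) F := fromBlocks 0 1 1 0 with hSdef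
  have hS : (fromBlocks B 0 0 C) * S = fromBlocks 0 B C 0 := by
    simp [hSdef, Matrix.fromBlocks_multiply]
  have hmul : S * S = 1 := by
    simp [hSdef, Matrix.fromBlocks_multiply, ← Matrix.fromBlocks_one]
  have hu : IsUnit S := ⟨⟨S, S, hmul, hmul⟩, rfl⟩
  have hdet : IsUnit S.det := (Matrix.isUnit_iff_isUnit_det _).mp hu
  rw [← hS, Matrix.rank_mul_eq_left_of_isUnit_det _ _ hdet, rank_fromBlocks_diag]

lemma range_pow_succ {m : Type*} [Fintype m] [DecidableEq m] (A : Matrix m m F) (j : ℕ) :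
    LinearMap.range (A ^ (j+1)).mulVecLin
      = Submodule.map A.mulVecLin (LinearMap.range (A ^ j).mulVecLin) := by
  rw [pow_succ']
  rw [Matrix.mulVecLin_mul, LinearMap.range_comp]

lemma range_pow_le {m : Type*} [Fintype m] [DecidableEq m] (A : Matrix m m F) (j : ℕ) :
    LinearMap.range (A ^ (j+1)).mulVecLin ≤ LinearMap.range (A ^ j).mulVecLin := by
  rw [pow_succ, Matrix.mulVecLin_mul, LinearMap.range_comp]
  exact LinearMap.map_le_range

lemma range_pow_stab {m : Type*} [Fintype m] [DecidableEq m] (A : Matrix m m F) {j : ℕ}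
    (h : (A ^ j).rank = (A ^ (j+1)).rank) :
    ∀ i, j ≤ i → LinearMap.range (A ^ i).mulVecLin = LinearMap.range (A ^ j).mulVecLin := by
  have hbase : LinearMap.range (A ^ (j+1)).mulVecLin = LinearMap.range (A ^ j).mulVecLin :=
    Submodule.eq_of_le_of_finrank_eq (range_pow_le A j) h.symm
  intro i hi
  induction i with
  | zero => simp_all
  | succ i ih =>
      rcases Nat.lt_or_ge j (i+1) with hlt | hge
      · have hji : j ≤ i := Nat.lt_succ_iff.mp hlt
        rw [range_pow_succ, ih hji, ← range_pow_succ, hbase]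
      · have hij : i + 1 = j := by omega
        rw [hij]

lemma rank_pow_stab {m : Type*} [Fintype m] [DecidableEq m] (A : Matrix m m F) {j : ℕ}
    (h : (A ^ j).rank = (A ^ (j+1)).rank) {i : ℕ} (hij : j ≤ i) :
    (A ^ i).rank = (A ^ j).rank := by
  unfold Matrix.rank
  rw [range_pow_stab A h i hij]

lemma exists_rank_pow_stab {m : Type*} [Fintype m] [DecidableEq m] (A : Matrix m m F) :
    ∃ j, (A ^ j).rank = (A ^ (j+1)).rank := by
  by_contra hc
  push_neg at hc
  have hmono : ∀ j, (A ^ (j+1)).rank < (A ^ j).rank := by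
    intro j
    refine lt_of_le_of_ne ?_ fun h => hc j h.symm
    rw [pow_succ]
    exact Matrix.rank_mul_le_left _ _
  have key : ∀ j, (A ^ j).rank + j ≤ (A ^ 0).rank := by
    intro j
    induction j with
    | zero => simp
    | succ j ih => have := hmono j; omega
  have := key ((A ^ 0).rank + 1)
  omega

lemma isUnit_of_rank_eq_card {m : Type*} [Fintype m] [DecidableEq m] (A : Matrix m m F)
    (h : A.rank = Fintype.card m) : IsUnit A := by
  have htop : LinearMap.range A.mulVecLin = ⊤ := by
    apply Submodule.eq_top_of_finrank_eq
    rw [← Matrix.rank, h, Module.finrank_fintype_fun_eq_card]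
  have hsurj : Function.Surjective A.mulVec := by
    have := LinearMap.range_eq_top.mp htop
    simpa [Matrix.coe_mulVecLin] using this
  exact Matrix.mulVec_surjective_iff_isUnit.mp hsurj

lemma drazin_unique_aux {R : Type*} [Ring R] (A X X' : R) (j : ℕ)
    (h1 : A ^ (j+1) * X = A ^ j) (h2 : X * A * X = X) (h3 : A * X = X * A)
    (h1' : A ^ (j+1) * X' = A ^ j) (h2' : X' * A * X' = X') (h3' : A * X' = X' * A) :
    X = X' := by
  have fa : ∀ i, X ^ (i+1) * A ^ i = X := by
    intro i
    induction i with
    | zero => simp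
    | succ i ih =>
        rw [pow_succ' X, pow_succ A, mul_assoc X, ← mul_assoc (X ^ (i+1)), ih,
          ← h3, ← mul_assoc, h2]
  have fb : ∀ i, A ^ i * X' ^ (i+1) = X' := by
    intro i
    induction i with
    | zero => simp
    | succ i ih =>
        rw [pow_succ' A, pow_succ X', mul_assoc A, ← mul_assoc (A ^ i), ih,
          ← mul_assoc, h3', h2']
  have hcAX : Commute A X := h3
  have hXX' : X = X * (A * X') := by
    conv_lhs => rw [← fa j, ← h1', pow_succ A j, mul_assoc (A ^ j) A X',
      ← mul_assoc (X ^ (j+1)) (A ^ j) (A * X'), fa j]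
  have hX' : X * (A * X') = X' := by
    conv_rhs => rw [← fb j, ← h1, (hcAX.pow_left (j+1)).eq, pow_succ' A j,
      mul_assoc X, mul_assoc A, fb j]
  rw [hXX', hX']

end Aux

/-- for `Y = [[0, WW⁻],[W, 0]]` with `W` singular of index `k ≥ 1`,
`i(Y) = 2 i(W) − 1` and `Y^D = [[0, W^D W W⁻],[W W^D, 0]]`. -/
theorem drazin_antidiagonal_block {F : Type*} [Field F] {n : ℕ}
    (W Wm : Matrix (Fin n) (Fin n) F)
    (hsing : ¬ IsUnit W) (hWm : W * Wm * W = W)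
    (hk : 1 ≤ drazinIndex W)
    (WD : Matrix (Fin n) (Fin n) F) (hWD : IsDrazinInverse W WD)
    (YD : Matrix (Fin n ⊕ Fin n) (Fin n ⊕ Fin n) F)
    (hYD : IsDrazinInverse (Matrix.fromBlocks 0 (W * Wm) W 0) YD) :
    drazinIndex (Matrix.fromBlocks 0 (W * Wm) W 0) = 2 * drazinIndex W - 1 ∧
    YD = Matrix.fromBlocks 0 (WD * W * Wm) (W * WD) 0 := by
  obtain ⟨hD1, hD2, hD3⟩ := hWD
  set k := drazinIndex W with hkdef
  set Y : Matrix (Fin n ⊕ Fin n) (Fin n ⊕ Fin n) F := Matrix.fromBlocks 0 (W * Wm) W 0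
    with hYdef
  set X : Matrix (Fin n ⊕ Fin n) (Fin n ⊕ Fin n) F :=
    Matrix.fromBlocks 0 (WD * W * Wm) (W * WD) 0 with hXdef
  -- basic identities
  have hWm' : W * (Wm * W) = W := by rw [← mul_assoc, hWm]
  have gWm : ∀ Z : Matrix (Fin n) (Fin n) F, W * (Wm * (W * Z)) = W * Z := fun Z => by
    rw [← mul_assoc Wm W Z, ← mul_assoc W (Wm * W) Z, hWm']
  have idWm : ∀ i, (W ^ (i+1) * Wm) * W = W ^ (i+1) := fun i => by
    rw [pow_succ, mul_assoc (W ^ i) W Wm, mul_assoc (W ^ i) (W * Wm) W, hWm]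
  have idWm' : ∀ i, W ^ (i+1) * (Wm * W) = W ^ (i+1) := fun i => by
    rw [← mul_assoc, idWm i]
  have gWmPow : ∀ i, ∀ Z : Matrix (Fin n) (Fin n) F,
      W ^ (i+1) * (Wm * (W * Z)) = W ^ (i+1) * Z := fun i Z => by
    rw [← mul_assoc Wm W Z, ← mul_assoc, idWm' i]
  have gD3 : ∀ Z : Matrix (Fin n) (Fin n) F, W * (WD * Z) = WD * (W * Z) := fun Z => by
    rw [← mul_assoc, hD3, mul_assoc]
  have hD2' : WD * (W * WD) = WD := by rw [← mul_assoc, hD2]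
  have gD2 : ∀ Z : Matrix (Fin n) (Fin n) F, WD * (W * (WD * Z)) = WD * Z := fun Z => by
    rw [← mul_assoc W WD Z, ← mul_assoc, hD2']
  have gD1 : ∀ Z : Matrix (Fin n) (Fin n) F, W ^ (k+1) * (WD * Z) = W ^ k * Z := fun Z => by
    rw [← mul_assoc, hD1]
  -- power formulas
  have F2 : ∀ m, Y ^ (2*m+1) = fromBlocks 0 (W ^ (m+1) * Wm) (W ^ (m+1)) 0 := by
    intro m
    induction m with
    | zero => simp [hYdef]
    | succ m ih =>
        have h2 : 2*(m+1)+1 = (2*m+1) + 2 := by ring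
        have hYsq : Y ^ 2 = fromBlocks W 0 0 (W * (W * Wm)) := by
          rw [pow_two, hYdef]
          simp only [Matrix.fromBlocks_multiply, Matrix.zero_mul, Matrix.mul_zero,
            add_zero, zero_add, zero_mul, mul_zero]
          rw [hWm]
        rw [h2, pow_add, ih, hYsq]
        simp only [Matrix.fromBlocks_multiply, Matrix.zero_mul, Matrix.mul_zero,
          add_zero, zero_add, zero_mul, mul_zero]
        rw [Matrix.fromBlocks_inj]
        refine ⟨rfl, ?_, ?_, rfl⟩
        · rw [mul_assoc (W ^ (m+1)) Wm _, gWmPow m (W * Wm), ← mul_assoc, ← pow_succ]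
        · rw [← pow_succ]
  have F1 : ∀ m, Y ^ (2*(m+1)) = fromBlocks (W ^ (m+1)) 0 0 (W ^ (m+2) * Wm) := by
    intro m
    have h2 : 2*(m+1) = (2*m+1) + 1 := by ring
    rw [h2, pow_succ, F2 m, hYdef]
    simp only [Matrix.fromBlocks_multiply, Matrix.zero_mul, Matrix.mul_zero,
      add_zero, zero_add, zero_mul, mul_zero]
    rw [Matrix.fromBlocks_inj]
    refine ⟨?_, rfl, rfl, ?_⟩
    · exact idWm m
    · rw [← mul_assoc, ← pow_succ]
  -- rank identities
  have hr8 : ∀ i, (W ^ (i+1) * Wm).rank = (W ^ (i+1)).rank := by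
    intro i
    refine le_antisymm (Matrix.rank_mul_le_left _ _) ?_
    conv_lhs => rw [← idWm i]
    exact Matrix.rank_mul_le_left _ _
  have hsetW : {j : ℕ | (W ^ j).rank = (W ^ (j+1)).rank}.Nonempty := exists_rank_pow_stab W
  have hkmem : (W ^ k).rank = (W ^ (k+1)).rank := Nat.sInf_mem hsetW
  have hk1 : k = (k-1) + 1 := by omega
  have ek2 : k - 1 + 2 = k + 1 := by omega
  have ek1 : k - 1 + 1 = k := by omega
  have hY2k : Y ^ (2*k) = fromBlocks (W ^ k) 0 0 (W ^ (k+1) * Wm) := by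
    conv_lhs => rw [hk1]
    rw [F1 (k-1), ek2, ek1]
  have hY2k1 : Y ^ (2*k-1) = fromBlocks 0 (W ^ k * Wm) (W ^ k) 0 := by
    have e : 2*k-1 = 2*(k-1)+1 := by omega
    rw [e, F2 (k-1), ek1]
  have he1 : Y ^ (2*k) * X = Y ^ (2*k-1) := by
    rw [hY2k, hY2k1, hXdef]
    simp only [Matrix.fromBlocks_multiply, Matrix.zero_mul, Matrix.mul_zero, add_zero, zero_add,
      zero_mul, mul_zero]
    rw [Matrix.fromBlocks_inj]
    refine ⟨rfl, ?_, ?_, rfl⟩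
    · rw [mul_assoc WD W Wm, ← gD3 Wm, ← mul_assoc, ← pow_succ, gD1 Wm]
    · rw [← mul_assoc (W ^ (k+1) * Wm) W WD, idWm k, hD1]
  have e2k : 2*k-1+1 = 2*k := by omega
  have hYmem : (Y ^ (2*k-1)).rank = (Y ^ (2*k-1+1)).rank := by
    rw [e2k]
    refine le_antisymm ?_ ?_
    · conv_lhs => rw [← he1]
      exact Matrix.rank_mul_le_left _ _
    · conv_lhs => rw [show 2*k = (2*k-1)+1 from e2k.symm, pow_succ]
      exact Matrix.rank_mul_le_left _ _
  have hrkWm : (W ^ k * Wm).rank = (W ^ k).rank := by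
    have h := hr8 (k-1); rwa [ek1] at h
  have hlower : ∀ m ∈ {j : ℕ | (Y ^ j).rank = (Y ^ (j+1)).rank}, 2*k-1 ≤ m := by
    intro m hm
    by_contra hlt
    push_neg at hlt
    have hm' : (Y ^ m).rank = (Y ^ (m+1)).rank := hm
    have hstab : (Y ^ (2*k-2)).rank = (Y ^ (2*k-1)).rank := by
      rw [rank_pow_stab Y hm' (show m ≤ 2*k-2 by omega),
        rank_pow_stab Y hm' (show m ≤ 2*k-1 by omega)]
    have h21 : (Y ^ (2*k-1)).rank = (W ^ k).rank + (W ^ k).rank := by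
      rw [hY2k1, rank_fromBlocks_antidiag, hrkWm]
    rcases Nat.lt_or_ge 1 k with hk2 | hk1'
    · -- k ≥ 2
      have e1 : 2*k-2 = 2*((k-2)+1) := by omega
      have e2 : (k-2)+1 = k-1 := by omega
      have e3 : (k-2)+2 = k := by omega
      have h22 : (Y ^ (2*k-2)).rank = (W ^ (k-1)).rank + (W ^ k).rank := by
        rw [e1, F1 (k-2), rank_fromBlocks_diag, e2, e3]
        have h := hr8 (k-1); rw [ek1] at h
        rw [h]
      have hkm1 : (W ^ (k-1)).rank = (W ^ ((k-1)+1)).rank := by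
        rw [ek1]; omega
      have : k ≤ k - 1 := Nat.sInf_le hkm1
      omega
    · -- k = 1
      have hke : k = 1 := by omega
      have e0 : 2*k-2 = 0 := by omega
      have e1' : 2*k-1 = 1 := by omega
      rw [e0, e1', pow_zero, pow_one] at hstab
      rw [e1', pow_one, hke, pow_one] at h21
      have hrank1 : (1 : Matrix (Fin n ⊕ Fin n) (Fin n ⊕ Fin n) F).rank = n + n := by
        rw [Matrix.rank_one, Fintype.card_sum, Fintype.card_fin]
      have hWle : W.rank ≤ n := by
        have := W.rank_le_card_width
        rwa [Fintype.card_fin] at this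
      have hWrank : W.rank = n := by omega
      exact hsing (isUnit_of_rank_eq_card W (by rw [hWrank, Fintype.card_fin]))
  have hiY : drazinIndex Y = 2*k-1 :=
    le_antisymm (Nat.sInf_le hYmem) (le_csInf ⟨2*k-1, hYmem⟩ hlower)
  -- Drazin equations for X
  have hXeq1 : Y ^ (drazinIndex Y + 1) * X = Y ^ drazinIndex Y := by
    rw [hiY, e2k]; exact he1
  have hXY : X * Y = fromBlocks (W * WD) 0 0 (W * (WD * (W * Wm))) := by
    rw [hYdef, hXdef]
    simp only [Matrix.fromBlocks_multiply, Matrix.zero_mul, Matrix.mul_zero, add_zero, zero_add,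
      zero_mul, mul_zero]
    rw [Matrix.fromBlocks_inj]
    refine ⟨?_, rfl, rfl, ?_⟩
    · rw [mul_assoc WD W Wm, mul_assoc WD (W * Wm) W, hWm, ← hD3]
    · rw [mul_assoc]
  have hYX : Y * X = fromBlocks (W * WD) 0 0 (W * (WD * (W * Wm))) := by
    rw [hYdef, hXdef]
    simp only [Matrix.fromBlocks_multiply, Matrix.zero_mul, Matrix.mul_zero, add_zero, zero_add,
      zero_mul, mul_zero]
    rw [Matrix.fromBlocks_inj]
    refine ⟨?_, rfl, rfl, ?_⟩
    · rw [mul_assoc W Wm (W * WD), gWm WD]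
    · rw [mul_assoc WD W Wm]
  have hXeq3 : Y * X = X * Y := by rw [hXY, hYX]
  have hXeq2 : X * Y * X = X := by
    rw [hXY, hXdef]
    simp only [Matrix.fromBlocks_multiply, Matrix.zero_mul, Matrix.mul_zero, add_zero, zero_add,
      zero_mul, mul_zero]
    rw [Matrix.fromBlocks_inj]
    refine ⟨rfl, ?_, ?_, rfl⟩
    · rw [hD3, mul_assoc WD W Wm, mul_assoc WD W (WD * (W * Wm)), gD2 (W * Wm)]
    · simp only [mul_assoc]
      rw [gWm WD, hD2']
  obtain ⟨hE1, hE2, hE3⟩ := hYD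
  exact ⟨hiY, drazin_unique_aux Y YD X (drazinIndex Y) hE1 hE2 hE3 hXeq1 hXeq2 hXeq3⟩
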